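/- A unicellular map of genus 0 (a planar tree) has no trisections; equivalently, for a plane tree, following the boundary cycle γ, the first visit to each vertex is via its minimum half-edge and every down-step h has σ(h) equal to the minimum half-edge of its vertex. -/

import Mathlib

open scoped Classical

/-- The number of cycles (orbits, including fixed points) of a permutation. -/
def cycleCount {H : Type*} [Fintype H] [DecidableEq H] (σ : Equiv.Perm H) : ℕ :=
  (Fintype.card H - σ.support.card) + σ.cycleType.card

/-- The position of `h` in the orbit of the root `r` under `γ`: the least `k` with
`γ^k r = h` (and `0` if `h` is not in the orbit).  This induces the linear order
`<_γ` on half-edges. -/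
noncomputable def gpos {H : Type*} (γ : Equiv.Perm H) (r h : H) : ℕ :=
  if hh : ∃ k, (γ ^ k) r = h then Nat.find hh else 0

/-- `m` is the minimum half-edge (w.r.t. `<_γ` rooted at `r`) of its `σ`-cycle. -/
def IsMinHE {H : Type*} (σ γ : Equiv.Perm H) (r m : H) : Prop :=
  ∀ y, σ.SameCycle m y → gpos γ r m ≤ gpos γ r y

/-- `h` is a trisection: a down-step (`σ h ≤_γ h`) such that `σ h` is not the minimum
half-edge of its vertex. -/
def IsTrisection {H : Type*} (σ γ : Equiv.Perm H) (r h : H) : Prop :=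
  gpos γ r (σ h) ≤ gpos γ r h ∧ ¬ IsMinHE σ γ r (σ h)

open Equiv Equiv.Perm Finset

lemma finRotate_pow_zero {N : ℕ} (hN : 0 < N) (k : ℕ) :
    ((finRotate N) ^ k) ⟨0, hN⟩ = ⟨k % N, Nat.mod_lt _ hN⟩ := by
  induction k with
  | zero => simp [Fin.ext_iff, Nat.zero_mod]
  | succ k ih =>
    rw [pow_succ', Equiv.Perm.mul_apply, ih]
    match N, hN with
    | (m+1), _ =>
      rw [finRotate_succ_apply]
      simp only [Fin.ext_iff, Fin.add_def, Fin.val_one']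
      rw [← Nat.add_mod]

lemma gpos_eq {N : ℕ} (hN : 0 < N) (h : Fin N) :
    gpos (finRotate N) ⟨0, hN⟩ h = h.val := by
  have hex : ∃ k, ((finRotate N) ^ k) ⟨0, hN⟩ = h :=
    ⟨h.val, by rw [finRotate_pow_zero hN]; exact Fin.ext (Nat.mod_eq_of_lt h.isLt)⟩
  rw [gpos, dif_pos hex]
  apply le_antisymm
  · exact @Nat.find_le _ _ (fun k => Classical.propDecidable _) hex
      (by rw [finRotate_pow_zero hN]; exact Fin.ext (Nat.mod_eq_of_lt h.isLt))
  · have h1 := @Nat.find_spec _ (fun k => Classical.propDecidable _) hex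
    rw [finRotate_pow_zero hN] at h1
    have h2 : (@Nat.find _ (fun k => Classical.propDecidable _) hex) % N = h.val :=
      congrArg Fin.val h1
    have h3 := Nat.mod_le (@Nat.find _ (fun k => Classical.propDecidable _) hex) N
    omega

lemma card_involution_lt {N : ℕ} (β : Equiv.Perm (Fin N))
    (hinv : β * β = 1) (hfpf : ∀ x, β x ≠ x) :
    2 * (univ.filter (fun y : Fin N => (β y).val < y.val)).card = N := by
  have hββ : ∀ x, β (β x) = x := by
    intro x
    have := congrArg (fun f : Equiv.Perm (Fin N) => f x) hinv
    simpa [Equiv.Perm.mul_apply] using this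
  set S := univ.filter (fun y : Fin N => (β y).val < y.val) with hS
  set T := univ.filter (fun y : Fin N => ¬ (β y).val < y.val) with hT
  have hcard : S.card = T.card := by
    apply Finset.card_bij (fun y _ => β y)
    · intro y hy
      simp only [hS, hT, mem_filter, mem_univ, true_and] at hy ⊢
      rw [hββ]; omega
    · intro a ha b hb hab
      exact β.injective hab
    · intro t ht
      simp only [hS, hT, mem_filter, mem_univ, true_and] at ht ⊢
      refine ⟨β t, ?_, hββ t⟩
      rw [hββ]
      have : (β t).val ≠ t.val := fun hc => hfpf t (Fin.val_injective hc)
      omega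
  have hsum : S.card + T.card = N := by
    rw [hS, hT, Finset.card_filter_add_card_filter_not]
    simp
  omega

lemma finRotate_val_of_lt {N : ℕ} (h : Fin N) (hlt : h.val + 1 < N) :
    (finRotate N h).val = h.val + 1 := by
  match N, h, hlt with
  | (m+1), h, hlt =>
    rw [finRotate_succ_apply]
    simp only [Fin.add_def, Fin.val_one']
    conv_lhs => rw [show (h.val : ℕ) = h.val % (m+1) from (Nat.mod_eq_of_lt h.isLt).symm]
    rw [← Nat.add_mod, Nat.mod_eq_of_lt hlt]


/-- A unicellular map of genus `0` (a planar tree) has no trisections: every down-step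
`h` has `σ h` equal to the minimum half-edge of its vertex.  Encoding as in Chapuy:
a rooted unicellular map with `n` edges is a fixed-point-free involution `α` on the
`2n` half-edges, with boundary cycle `γ = finRotate (2n)` rooted at `0` and vertex
permutation `σ = α⁻¹ * γ`; genus `0` means the number of vertices is `n + 1`. -/
theorem planar_tree_no_trisections {n : ℕ} (hn : 0 < n)
    (α : Equiv.Perm (Fin (2 * n)))
    (hinv : α * α = 1) (hfpf : ∀ x, α x ≠ x)
    (hg : cycleCount (α⁻¹ * finRotate (2 * n)) = n + 1) :
    (∀ h : Fin (2 * n),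
        ¬ IsTrisection (α⁻¹ * finRotate (2 * n)) (finRotate (2 * n)) ⟨0, by omega⟩ h) ∧
    (∀ h : Fin (2 * n),
        gpos (finRotate (2 * n)) ⟨0, by omega⟩ ((α⁻¹ * finRotate (2 * n)) h) ≤
          gpos (finRotate (2 * n)) ⟨0, by omega⟩ h →
        IsMinHE (α⁻¹ * finRotate (2 * n)) (finRotate (2 * n)) ⟨0, by omega⟩
          ((α⁻¹ * finRotate (2 * n)) h)) := by
  have hN : 0 < 2 * n := by omega
  set γ : Equiv.Perm (Fin (2 * n)) := finRotate (2 * n) with hγ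
  set σ : Equiv.Perm (Fin (2 * n)) := α⁻¹ * γ with hσdef
  have hαinv : α⁻¹ = α := inv_eq_of_mul_eq_one_left hinv
  have hσ : ∀ h, σ h = α (γ h) := by
    intro h; rw [hσdef, Equiv.Perm.mul_apply, hαinv]
  -- the two key finsets
  set D : Finset (Fin (2 * n)) := univ.filter (fun h => (σ h).val ≤ h.val) with hD
  set M : Finset (Fin (2 * n)) :=
    univ.filter (fun h => ∀ y, σ.SameCycle (σ h) y → (σ h).val ≤ y.val) with hM
  -- M ⊆ D
  have hMD : M ⊆ D := by
    intro h hh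
    simp only [hM, mem_filter, mem_univ, true_and] at hh
    simp only [hD, mem_filter, mem_univ, true_and]
    exact hh h ((Equiv.Perm.sameCycle_apply_left).mpr (Equiv.Perm.SameCycle.refl _ _))
  -- upper bound on D
  have hDcard : D.card ≤ n + 1 := by
    set L : Fin (2 * n) := ⟨2 * n - 1, by omega⟩ with hL
    have hS := card_involution_lt α hinv hfpf
    set S := univ.filter (fun y : Fin (2 * n) => (α y).val < y.val) with hSdef
    have hmap : ∀ h ∈ D.erase L, γ h ∈ S := by
      intro h hh
      rw [Finset.mem_erase] at hh
      obtain ⟨hne, hmem⟩ := hh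
      simp only [hD, mem_filter, mem_univ, true_and] at hmem
      have hlt : h.val + 1 < 2 * n := by
        have h1 : h.val ≠ 2 * n - 1 := fun hc => hne (Fin.ext (by rw [hc]))
        have h2 := h.isLt
        omega
      have hval : (γ h).val = h.val + 1 := finRotate_val_of_lt h hlt
      simp only [hSdef, mem_filter, mem_univ, true_and]
      rw [← hσ, hval]
      omega
    have hinj : Set.InjOn (fun h => γ h) (D.erase L) := fun a _ b _ hab => γ.injective hab
    have h1 : (D.erase L).card ≤ S.card := Finset.card_le_card_of_injOn _ hmap hinj
    have h2 : D.card - 1 ≤ (D.erase L).card := Finset.pred_card_le_card_erase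
    omega
  -- lower bound on M
  have hMcard : n + 1 ≤ M.card := by
    set F := univ.filter (fun h : Fin (2 * n) => σ h = h) with hF
    have hFM : F ⊆ M := by
      intro h hh
      simp only [hF, mem_filter, mem_univ, true_and] at hh
      simp only [hM, mem_filter, mem_univ, true_and]
      intro y hy
      rw [hh] at hy
      have hyh : y = h := by
        obtain ⟨i, hi⟩ := hy
        rw [← hi, Equiv.Perm.zpow_apply_eq_self_of_apply_eq_self hh]
      rw [hh, hyh]
    set C := σ.cycleFactorsFinset with hC
    set g : Equiv.Perm (Fin (2 * n)) → Fin (2 * n) := fun c =>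
      σ⁻¹ (if hc : c.support.Nonempty then c.support.min' hc else ⟨0, hN⟩) with hg'
    have hgC : ∀ c ∈ C, σ (g c) ∈ c.support ∧ σ (g c) ∈ σ.support ∧
        (∀ y, σ.SameCycle (σ (g c)) y → (σ (g c)).val ≤ y.val) := by
      intro c hc
      have hcyc := (mem_cycleFactorsFinset_iff.mp hc).1
      have hne := hcyc.nonempty_support
      have hgc : σ (g c) = c.support.min' hne := by
        rw [hg', Equiv.Perm.inv_def, Equiv.apply_symm_apply, dif_pos hne]
      have hmemc : σ (g c) ∈ c.support := by rw [hgc]; exact Finset.min'_mem _ _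
      have hmemσ : σ (g c) ∈ σ.support := by
        rw [Equiv.Perm.mem_support]
        rw [← (mem_cycleFactorsFinset_iff.mp hc).2 _ hmemc]
        exact Equiv.Perm.mem_support.mp hmemc
      refine ⟨hmemc, hmemσ, ?_⟩
      intro y hy
      have hcyceq : c = σ.cycleOf (σ (g c)) := cycle_is_cycleOf hmemc hc
      have hysupp : y ∈ c.support := by
        rw [hcyceq]
        exact (Equiv.Perm.mem_support_cycleOf_iff).mpr ⟨hy, hmemσ⟩
      have := Finset.min'_le c.support y hysupp
      rw [hgc]
      exact this
    have himg : F ∪ C.image g ⊆ M := by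
      apply Finset.union_subset hFM
      intro x hx
      obtain ⟨c, hc, rfl⟩ := Finset.mem_image.mp hx
      simp only [hM, mem_filter, mem_univ, true_and]
      exact (hgC c hc).2.2
    have hdisj : Disjoint F (C.image g) := by
      rw [Finset.disjoint_left]
      intro x hxF hxI
      obtain ⟨c, hc, rfl⟩ := Finset.mem_image.mp hxI
      simp only [hF, mem_filter, mem_univ, true_and] at hxF
      have := (hgC c hc).2.1
      rw [Equiv.Perm.mem_support, hxF] at this
      exact this hxF
    have hinjg : Set.InjOn g C := by
      intro c hc c' hc' hcc
      by_contra hne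
      have hd : Equiv.Perm.Disjoint c c' :=
        (Equiv.Perm.cycleFactorsFinset_pairwise_disjoint σ) hc hc' hne
      have hds := hd.disjoint_support
      have h1 := (hgC c hc).1
      have h2 := (hgC c' hc').1
      rw [hcc] at h1
      exact Finset.disjoint_left.mp hds h1 h2
    have hcardF : F.card = 2 * n - σ.support.card := by
      have : F = σ.supportᶜ := by
        ext x; simp [hF, Equiv.Perm.mem_support]
      rw [this, Finset.card_compl, Fintype.card_fin]
    have hcardC : (C.image g).card = σ.cycleType.card := by
      rw [Finset.card_image_of_injOn hinjg, Equiv.Perm.cycleType, hC]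
      simp
    have hcount : cycleCount σ = n + 1 := hg
    rw [cycleCount, Fintype.card_fin] at hcount
    calc n + 1 = F.card + (C.image g).card := by rw [hcardF, hcardC]; omega
    _ = (F ∪ C.image g).card := (Finset.card_union_of_disjoint hdisj).symm
    _ ≤ M.card := Finset.card_le_card himg
  -- conclude D = M
  have hDM : M = D := Finset.eq_of_subset_of_card_le hMD (by omega)
  have key : ∀ h : Fin (2 * n), (σ h).val ≤ h.val →
      ∀ y, σ.SameCycle (σ h) y → (σ h).val ≤ y.val := by
    intro h hle
    have hD' : h ∈ D := by simp only [hD, mem_filter, mem_univ, true_and]; exact hle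
    rw [← hDM] at hD'
    simp only [hM, mem_filter, mem_univ, true_and] at hD'
    exact hD'
  have part2 : ∀ h : Fin (2 * n),
      gpos γ ⟨0, hN⟩ (σ h) ≤ gpos γ ⟨0, hN⟩ h → IsMinHE σ γ ⟨0, hN⟩ (σ h) := by
    intro h hle
    rw [hγ, gpos_eq hN, gpos_eq hN] at hle
    intro y hy
    rw [hγ, gpos_eq hN, gpos_eq hN]
    exact key h hle y hy
  refine ⟨?_, part2⟩
  intro h htri
  obtain ⟨h1, h2⟩ := htri
  exact h2 (part2 h h1)
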